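/- For every ℓ ∈ ℕ and every v ≥ 0, the Laguerre function satisfies |𝓛_ℓ(v)| = |L_ℓ(v) e^{−v/2}| ≤ 1. -/

import Mathlib

open Real

/-- Laguerre polynomial of type 0 and degree ℓ. -/
noncomputable def laguerrePoly (ℓ : ℕ) (v : ℝ) : ℝ :=
  ∑ k ∈ Finset.range (ℓ + 1), (-1 : ℝ) ^ k * (ℓ.choose (ℓ - k) : ℝ) * v ^ k / (k.factorial : ℝ)

/-- Laguerre function `𝓛_ℓ(v) = L_ℓ(v) e^{-v/2}`. -/
noncomputable def laguerreFun (ℓ : ℕ) (v : ℝ) : ℝ := laguerrePoly ℓ v * Real.exp (-v / 2)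

open Finset

noncomputable def Ecoef (b : ℝ) (j m : ℕ) : ℝ :=
  if j ≤ m then b ^ (m - j) / (m - j).factorial else 0

/-- single term of exp series bound: `x^j ≤ j! * exp x` for `x ≥ 0`. -/
lemma pow_le_factorial_mul_exp (x : ℝ) (hx : 0 ≤ x) (j : ℕ) :
    x ^ j ≤ j.factorial * Real.exp x := by
  have h := Real.sum_le_exp_of_nonneg hx (j+1)
  have h2 : x ^ j / j.factorial ≤ Real.exp x := by
    refine le_trans ?_ h
    exact Finset.single_le_sum (f := fun i => x ^ i / i.factorial)
      (fun i _ => by positivity) (Finset.self_mem_range_succ j)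
  calc x ^ j = (x ^ j / j.factorial) * j.factorial := by
        field_simp
    _ ≤ Real.exp x * j.factorial := by
        apply mul_le_mul_of_nonneg_right h2 (by positivity)
    _ = j.factorial * Real.exp x := by ring

lemma exp_shift_summable (t : ℝ) (r : ℕ) :
    Summable (fun s : ℕ => (s.choose r : ℝ) * t ^ s / s.factorial) := by
  rw [← summable_nat_add_iff r]
  have heq : ∀ s : ℕ, (((s + r).choose r : ℝ)) * t ^ (s + r) / (s + r).factorial
      = (t ^ r / r.factorial) * (t ^ s / s.factorial) := by
    intro s
    have h : ((s + r).choose r) * r.factorial * s.factorial = (s + r).factorial := by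
      have := Nat.choose_mul_factorial_mul_factorial (Nat.le_add_left r s)
      simpa [Nat.add_sub_cancel] using this
    have hc : (((s + r).choose r : ℝ)) * r.factorial * s.factorial = (s + r).factorial := by
      exact_mod_cast h
    have h1 : (r.factorial : ℝ) ≠ 0 := by positivity
    have h2 : (s.factorial : ℝ) ≠ 0 := by positivity
    have h3 : ((s + r).factorial : ℝ) ≠ 0 := by positivity
    field_simp [pow_add]
    linear_combination (t ^ s * t ^ r) * hc
  simp only [heq]
  exact (Real.summable_pow_div_factorial t).mul_left _

lemma exp_shift (t : ℝ) (r : ℕ) :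
    ∑' s : ℕ, (s.choose r : ℝ) * t ^ s / s.factorial
      = t ^ r * Real.exp t / r.factorial := by
  have hs := exp_shift_summable t r
  have h := Summable.sum_add_tsum_nat_add (f := fun s : ℕ => (s.choose r : ℝ) * t ^ s / s.factorial) r hs
  have hhead : ∑ i ∈ Finset.range r, ((i.choose r : ℝ) * t ^ i / i.factorial) = 0 := by
    apply Finset.sum_eq_zero
    intro i hi
    rw [Nat.choose_eq_zero_of_lt (Finset.mem_range.mp hi)]
    simp
  have heq : ∀ s : ℕ, (((s + r).choose r : ℝ)) * t ^ (s + r) / (s + r).factorial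
      = (t ^ r / r.factorial) * (t ^ s / s.factorial) := by
    intro s
    have h : ((s + r).choose r) * r.factorial * s.factorial = (s + r).factorial := by
      have := Nat.choose_mul_factorial_mul_factorial (Nat.le_add_left r s)
      simpa [Nat.add_sub_cancel] using this
    have hc : (((s + r).choose r : ℝ)) * r.factorial * s.factorial = (s + r).factorial := by
      exact_mod_cast h
    have h1 : (r.factorial : ℝ) ≠ 0 := by positivity
    have h2 : (s.factorial : ℝ) ≠ 0 := by positivity
    have h3 : ((s + r).factorial : ℝ) ≠ 0 := by positivity
    field_simp [pow_add]
    linear_combination (t ^ s * t ^ r) * hc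
  rw [← h, hhead, zero_add]
  simp only [heq]
  rw [tsum_mul_left]
  have hexp : ∑' s : ℕ, t ^ s / (s.factorial : ℝ) = Real.exp t := by
    rw [Real.exp_eq_exp_ℝ, NormedSpace.exp_eq_tsum_div]
  rw [hexp]
  ring

lemma choose_mul_summable (u : ℝ) (j k : ℕ) :
    Summable (fun s : ℕ => ((s + k).choose j : ℝ) * u ^ s / s.factorial) := by
  have hg : Summable (fun s : ℕ =>
      (j.factorial * Real.exp k) * ((Real.exp 1 * |u|) ^ s / s.factorial)) :=
    (Real.summable_pow_div_factorial _).mul_left _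
  refine Summable.of_norm_bounded hg ?_
  intro s
  have h1 : ((s + k).choose j : ℝ) ≤ ((s + k : ℕ) : ℝ) ^ j := by
    exact_mod_cast Nat.choose_le_pow (s + k) j
  have h2 : ((s + k : ℕ) : ℝ) ^ j ≤ j.factorial * Real.exp ((s + k : ℕ) : ℝ) := by
    exact pow_le_factorial_mul_exp _ (by positivity) j
  have h3 : Real.exp ((s + k : ℕ) : ℝ) = Real.exp 1 ^ s * Real.exp k := by
    rw [← Real.exp_nat_mul, ← Real.exp_add]
    push_cast
    ring_nf
  have key : ((s + k).choose j : ℝ) * |u| ^ s ≤ j.factorial * Real.exp k * (Real.exp 1 * |u|) ^ s := by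
    rw [mul_pow]
    calc ((s + k).choose j : ℝ) * |u| ^ s
        ≤ (j.factorial * (Real.exp 1 ^ s * Real.exp k)) * |u| ^ s := by
          apply mul_le_mul_of_nonneg_right (by rw [← h3]; exact h1.trans h2) (by positivity)
      _ = j.factorial * Real.exp k * (Real.exp 1 ^ s * |u| ^ s) := by ring
  have hnorm : ‖((s + k).choose j : ℝ) * u ^ s / s.factorial‖
      = ((s + k).choose j : ℝ) * |u| ^ s / s.factorial := by
    rw [Real.norm_eq_abs, abs_div, abs_mul, abs_pow]
    congr 1
    · congr 1 <;> simp
    · simp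
  rw [hnorm, div_le_iff₀ (by positivity)]
  calc ((s + k).choose j : ℝ) * |u| ^ s ≤ j.factorial * Real.exp k * (Real.exp 1 * |u|) ^ s := key
    _ = ↑j.factorial * Real.exp ↑k * ((Real.exp 1 * |u|) ^ s / ↑s.factorial) * ↑s.factorial := by
        field_simp

lemma Fterm_shift (b c : ℝ) (j k : ℕ) (hjk : j ≤ k) (s : ℕ) :
    ((s + k).factorial : ℝ) * Ecoef b j (s + k) * Ecoef c k (s + k)
      = (j.factorial * b ^ (k - j)) * (((s + k).choose j : ℝ) * (b * c) ^ s / s.factorial) := by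
  obtain ⟨d, rfl⟩ := Nat.exists_eq_add_of_le hjk
  rw [Ecoef, Ecoef, if_pos (by omega : j ≤ s + (j + d)), if_pos (by omega : j + d ≤ s + (j + d))]
  have e1 : s + (j + d) - j = d + s := by omega
  have e2 : s + (j + d) - (j + d) = s := by omega
  have e3 : j + d - j = d := by omega
  rw [e1, e2, e3]
  have hc : (((s + (j + d)).choose j : ℝ)) * j.factorial * (d + s).factorial
      = ((s + (j + d)).factorial : ℝ) := by
    have := Nat.choose_mul_factorial_mul_factorial (by omega : j ≤ s + (j + d))
    rw [e1] at this
    exact_mod_cast this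
  have h1 : ((d + s).factorial : ℝ) ≠ 0 := by positivity
  have h2 : ((s).factorial : ℝ) ≠ 0 := by positivity
  field_simp [pow_add, mul_pow]
  rw [← hc]
  ring

lemma Fterm_head (b c : ℝ) (j k m : ℕ) (hm : m < k) :
    ((m).factorial : ℝ) * Ecoef b j m * Ecoef c k m = 0 := by
  simp only [Ecoef]
  rw [if_neg (show ¬ k ≤ m by omega)]
  ring

lemma summable_F_le (b c : ℝ) (j k : ℕ) (hjk : j ≤ k) :
    Summable (fun m : ℕ => ((m).factorial : ℝ) * Ecoef b j m * Ecoef c k m) := by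
  rw [← summable_nat_add_iff k]
  simp only [Fterm_shift b c j k hjk]
  exact (choose_mul_summable (b * c) j k).mul_left _

lemma tsum_F_le (b c : ℝ) (j k : ℕ) (hjk : j ≤ k) :
    ∑' m : ℕ, ((m).factorial : ℝ) * Ecoef b j m * Ecoef c k m
      = Real.exp (b * c) * ∑ i ∈ Finset.range (j + 1),
          (j.choose i : ℝ) * (k.choose i : ℝ) * i.factorial * b ^ (k - i) * c ^ (j - i) := by
  have hs := summable_F_le b c j k hjk
  have h := Summable.sum_add_tsum_nat_add
    (f := fun m : ℕ => ((m).factorial : ℝ) * Ecoef b j m * Ecoef c k m) k hs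
  have hhead : ∑ i ∈ Finset.range k, (((i).factorial : ℝ) * Ecoef b j i * Ecoef c k i) = 0 :=
    Finset.sum_eq_zero fun i hi => Fterm_head b c j k i (Finset.mem_range.mp hi)
  rw [← h, hhead, zero_add]
  simp only [Fterm_shift b c j k hjk]
  rw [tsum_mul_left]
  -- now evaluate ∑' s, C(s+k,j)(bc)^s/s!
  have hvan : ∀ s : ℕ, (((s + k).choose j : ℝ)) * (b*c) ^ s / s.factorial
      = ∑ i ∈ Finset.range (j + 1),
          (k.choose i : ℝ) * ((s.choose (j - i) : ℝ) * (b*c) ^ s / s.factorial) := by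
    intro s
    have hv : ((k + s).choose j) = ∑ i ∈ Finset.range (j + 1), k.choose i * s.choose (j - i) := by
      rw [Nat.add_choose_eq]
      rw [Finset.Nat.sum_antidiagonal_eq_sum_range_succ_mk]
    rw [add_comm s k, hv]
    push_cast
    rw [Finset.sum_mul, Finset.sum_div]
    apply Finset.sum_congr rfl
    intro i _
    ring
  simp only [hvan]
  rw [Summable.tsum_finsetSum (fun i _ => ((exp_shift_summable (b*c) (j - i)).mul_left _))]
  have : ∀ i ∈ Finset.range (j + 1),
      (∑' s : ℕ, (k.choose i : ℝ) * ((s.choose (j - i) : ℝ) * (b*c) ^ s / s.factorial))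
        = (k.choose i : ℝ) * ((b*c) ^ (j - i) * Real.exp (b*c) / (j - i).factorial) := by
    intro i _
    rw [tsum_mul_left, exp_shift]
  rw [Finset.sum_congr rfl this, Finset.mul_sum, Finset.mul_sum]
  apply Finset.sum_congr rfl
  intro i hi
  have hij : i ≤ j := Nat.lt_succ_iff.mp (Finset.mem_range.mp hi)
  have hfac : ((j.choose i : ℝ)) * i.factorial * (j - i).factorial = (j.factorial : ℝ) := by
    exact_mod_cast Nat.choose_mul_factorial_mul_factorial hij
  have hpow : b ^ (k - j) * b ^ (j - i) = b ^ (k - i) := by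
    rw [← pow_add]
    congr 1
    omega
  have h1 : ((j - i).factorial : ℝ) ≠ 0 := by positivity
  rw [mul_pow, ← hpow, ← hfac]
  field_simp

lemma summable_F (b c : ℝ) (j k : ℕ) :
    Summable (fun m : ℕ => ((m).factorial : ℝ) * Ecoef b j m * Ecoef c k m) := by
  rcases le_or_gt j k with h | h
  · exact summable_F_le b c j k h
  · exact (summable_F_le c b k j h.le).congr (fun m => by ring)

lemma tsum_F (b c : ℝ) (j k : ℕ) :
    ∑' m : ℕ, ((m).factorial : ℝ) * Ecoef b j m * Ecoef c k m
      = Real.exp (b * c) * ∑ i ∈ Finset.range (j + 1),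
          (j.choose i : ℝ) * (k.choose i : ℝ) * i.factorial * b ^ (k - i) * c ^ (j - i) := by
  rcases le_or_gt j k with h | h
  · exact tsum_F_le b c j k h
  · have h1 : ∑' m : ℕ, ((m).factorial : ℝ) * Ecoef b j m * Ecoef c k m
        = ∑' m : ℕ, ((m).factorial : ℝ) * Ecoef c k m * Ecoef b j m :=
      tsum_congr (fun m => by ring)
    rw [h1, tsum_F_le c b k j h.le, mul_comm c b]
    congr 1
    rw [Finset.sum_subset (Finset.range_subset_range.mpr (by omega : k + 1 ≤ j + 1))]
    · exact Finset.sum_congr rfl (fun i _ => by ring)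
    · intro i _ hi
      have : k < i := by
        simp only [Finset.mem_range] at hi
        omega
      rw [Nat.choose_eq_zero_of_lt this]
      push_cast
      ring

noncomputable def pco (n : ℕ) (b : ℝ) (j : ℕ) : ℝ :=
  (-1 : ℝ) ^ (n - j) * (n.choose j : ℝ) * b ^ (n - j) / (n.factorial : ℝ)

noncomputable def Acoef (n : ℕ) (b : ℝ) (m : ℕ) : ℝ :=
  ∑ j ∈ Finset.range (n + 1), pco n b j * Ecoef b j m

lemma key_expand (n : ℕ) (b c : ℝ) (m : ℕ) :
    (m.factorial : ℝ) * Acoef n b m * Acoef n c m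
      = ∑ j ∈ Finset.range (n + 1), ∑ k ∈ Finset.range (n + 1),
          (pco n b j * pco n c k) * ((m.factorial : ℝ) * Ecoef b j m * Ecoef c k m) := by
  rw [Acoef, Acoef, mul_assoc, Finset.sum_mul_sum, Finset.mul_sum]
  apply Finset.sum_congr rfl
  intro j _
  rw [Finset.mul_sum]
  apply Finset.sum_congr rfl
  intro k _
  ring

lemma summable_AA (n : ℕ) (b c : ℝ) :
    Summable (fun m : ℕ => (m.factorial : ℝ) * Acoef n b m * Acoef n c m) := by
  apply Summable.congr ?_ (fun m => (key_expand n b c m).symm)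
  apply summable_sum
  intro j _
  apply summable_sum
  intro k _
  exact (summable_F b c j k).mul_left _

lemma tsum_AA (n : ℕ) (b c : ℝ) :
    ∑' m : ℕ, (m.factorial : ℝ) * Acoef n b m * Acoef n c m
      = Real.exp (b * c) * ∑ j ∈ Finset.range (n + 1), ∑ k ∈ Finset.range (n + 1),
          (pco n b j * pco n c k) * ∑ i ∈ Finset.range (j + 1),
            (j.choose i : ℝ) * (k.choose i : ℝ) * i.factorial * b ^ (k - i) * c ^ (j - i) := by
  have h0 : ∑' m : ℕ, (m.factorial : ℝ) * Acoef n b m * Acoef n c m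
      = ∑' m : ℕ, ∑ j ∈ Finset.range (n + 1), ∑ k ∈ Finset.range (n + 1),
          (pco n b j * pco n c k) * ((m.factorial : ℝ) * Ecoef b j m * Ecoef c k m) :=
    tsum_congr (key_expand n b c)
  rw [h0]
  rw [Summable.tsum_finsetSum (fun j _ => summable_sum (fun k _ => (summable_F b c j k).mul_left _))]
  rw [Finset.mul_sum]
  apply Finset.sum_congr rfl
  intro j _
  rw [Summable.tsum_finsetSum (fun k _ => (summable_F b c j k).mul_left _)]
  rw [Finset.mul_sum]
  apply Finset.sum_congr rfl
  intro k _
  rw [tsum_mul_left, tsum_F]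
  ring

lemma choose_sum_gen (x : ℝ) (n i : ℕ) (hi : i ≤ n) :
    ∑ j ∈ Finset.range (n + 1), x ^ (n - j) * (n.choose j : ℝ) * (j.choose i : ℝ)
      = (n.choose i : ℝ) * (1 + x) ^ (n - i) := by
  rw [Finset.range_eq_Ico,
    ← Finset.sum_Ico_consecutive _ (Nat.zero_le i) (by omega : i ≤ n + 1)]
  have h1 : ∑ j ∈ Finset.Ico 0 i, x ^ (n - j) * (n.choose j : ℝ) * (j.choose i : ℝ) = 0 := by
    apply Finset.sum_eq_zero
    intro j hj
    have : j < i := (Finset.mem_Ico.mp hj).2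
    rw [Nat.choose_eq_zero_of_lt this]
    push_cast
    ring
  rw [h1, zero_add, Finset.sum_Ico_eq_sum_range]
  have h2 : ∀ j' ∈ Finset.range (n + 1 - i),
      x ^ (n - (i + j')) * (n.choose (i + j') : ℝ) * ((i + j').choose i : ℝ)
        = (n.choose i : ℝ) * (((n - i).choose j' : ℝ) * x ^ ((n - i) - j')) := by
    intro j' hj'
    have hj'n : i + j' ≤ n := by
      have := Finset.mem_range.mp hj'
      omega
    have hmul : n.choose (i + j') * (i + j').choose i
        = n.choose i * (n - i).choose (i + j' - i) :=
      Nat.choose_mul (Nat.le_add_right i j')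
    have e1 : i + j' - i = j' := by omega
    rw [e1] at hmul
    have e2 : n - (i + j') = (n - i) - j' := by omega
    rw [e2]
    have : ((n.choose (i + j') : ℝ)) * ((i + j').choose i : ℝ)
        = (n.choose i : ℝ) * ((n - i).choose j' : ℝ) := by exact_mod_cast hmul
    calc x ^ (n - i - j') * (n.choose (i + j') : ℝ) * ((i + j').choose i : ℝ)
        = x ^ (n - i - j') * ((n.choose (i + j') : ℝ) * ((i + j').choose i : ℝ)) := by ring
      _ = x ^ (n - i - j') * ((n.choose i : ℝ) * ((n - i).choose j' : ℝ)) := by rw [this]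
      _ = (n.choose i : ℝ) * (((n - i).choose j' : ℝ) * x ^ ((n - i) - j')) := by ring
  rw [Finset.sum_congr rfl h2, ← Finset.mul_sum]
  congr 1
  have e3 : n + 1 - i = (n - i) + 1 := by omega
  rw [e3]
  have := add_pow (1 : ℝ) x (n - i)
  simp only [one_pow, one_mul] at this
  rw [this]
  apply Finset.sum_congr rfl
  intro j' _
  ring

lemma G_eq (n i : ℕ) (b : ℝ) (hi : i ≤ n) :
    ∑ j ∈ Finset.range (n + 1), pco n b j * (j.choose i : ℝ) * b ^ (j - i)
      = if i = n then ((n.factorial : ℝ))⁻¹ else 0 := by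
  have hterm : ∀ j ∈ Finset.range (n + 1),
      pco n b j * (j.choose i : ℝ) * b ^ (j - i)
        = (b ^ (n - i) / n.factorial) * ((-1 : ℝ) ^ (n - j) * (n.choose j : ℝ) * (j.choose i : ℝ)) := by
    intro j hj
    have hjn : j ≤ n := Nat.lt_succ_iff.mp (Finset.mem_range.mp hj)
    rcases le_or_gt i j with h | h
    · have hb : b ^ (n - j) * b ^ (j - i) = b ^ (n - i) := by
        rw [← pow_add]
        congr 1
        omega
      rw [pco]
      have hnf : (n.factorial : ℝ) ≠ 0 := by positivity
      field_simp
      rw [← hb]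
      ring
    · rw [Nat.choose_eq_zero_of_lt h]
      push_cast
      ring
  rw [Finset.sum_congr rfl hterm, ← Finset.mul_sum, choose_sum_gen (-1 : ℝ) n i hi]
  have h0 : (1 : ℝ) + (-1) = 0 := by norm_num
  rw [h0]
  rcases eq_or_ne i n with rfl | hne
  · simp
  · rw [zero_pow (by omega : n - i ≠ 0), if_neg hne]
    ring

lemma pco_neg (n j : ℕ) (b : ℝ) (hj : j ≤ n) :
    pco n (-b) j = (-1 : ℝ) ^ (n - j) * pco n b j := by
  rw [pco, pco, neg_pow b (n - j)]
  ring

lemma H1_eq (n i : ℕ) (b : ℝ) (hi : i ≤ n) :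
    ∑ j ∈ Finset.range (n + 1), pco n b j * (j.choose i : ℝ) * (-b) ^ (j - i)
      = (-1 : ℝ) ^ (n - i) * (n.choose i : ℝ) * 2 ^ (n - i) * b ^ (n - i) / n.factorial := by
  have hterm : ∀ j ∈ Finset.range (n + 1),
      pco n b j * (j.choose i : ℝ) * (-b) ^ (j - i)
        = ((-1 : ℝ) ^ (n - i) * b ^ (n - i) / n.factorial) *
            ((1 : ℝ) ^ (n - j) * (n.choose j : ℝ) * (j.choose i : ℝ)) := by
    intro j hj
    have hjn : j ≤ n := Nat.lt_succ_iff.mp (Finset.mem_range.mp hj)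
    rcases le_or_gt i j with h | h
    · have hb : b ^ (n - j) * b ^ (j - i) = b ^ (n - i) := by
        rw [← pow_add]; congr 1; omega
      have hs : (-1 : ℝ) ^ (n - j) * (-1 : ℝ) ^ (j - i) = (-1 : ℝ) ^ (n - i) := by
        rw [← pow_add]; congr 1; omega
      rw [pco, neg_pow b (j - i)]
      have hnf : (n.factorial : ℝ) ≠ 0 := by positivity
      calc (-1 : ℝ) ^ (n - j) * (n.choose j : ℝ) * b ^ (n - j) / n.factorial *
            (j.choose i : ℝ) * ((-1) ^ (j - i) * b ^ (j - i))
          = ((-1 : ℝ) ^ (n - j) * (-1) ^ (j - i)) * (b ^ (n - j) * b ^ (j - i)) *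
              ((n.choose j : ℝ) * (j.choose i : ℝ)) / n.factorial := by ring
        _ = ((-1 : ℝ) ^ (n - i)) * (b ^ (n - i)) *
              ((n.choose j : ℝ) * (j.choose i : ℝ)) / n.factorial := by rw [hb, hs]
        _ = ((-1 : ℝ) ^ (n - i) * b ^ (n - i) / n.factorial) *
              ((1 : ℝ) ^ (n - j) * (n.choose j : ℝ) * (j.choose i : ℝ)) := by
            rw [one_pow]; ring
    · rw [Nat.choose_eq_zero_of_lt h]
      push_cast
      ring
  rw [Finset.sum_congr rfl hterm, ← Finset.mul_sum, choose_sum_gen (1 : ℝ) n i hi]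
  norm_num
  ring

lemma H2_eq (n i : ℕ) (b : ℝ) (hi : i ≤ n) :
    ∑ j ∈ Finset.range (n + 1), pco n (-b) j * (j.choose i : ℝ) * b ^ (j - i)
      = (n.choose i : ℝ) * 2 ^ (n - i) * b ^ (n - i) / n.factorial := by
  have hterm : ∀ j ∈ Finset.range (n + 1),
      pco n (-b) j * (j.choose i : ℝ) * b ^ (j - i)
        = (b ^ (n - i) / n.factorial) * ((1 : ℝ) ^ (n - j) * (n.choose j : ℝ) * (j.choose i : ℝ)) := by
    intro j hj
    have hjn : j ≤ n := Nat.lt_succ_iff.mp (Finset.mem_range.mp hj)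
    rcases le_or_gt i j with h | h
    · have hb : b ^ (n - j) * b ^ (j - i) = b ^ (n - i) := by
        rw [← pow_add]; congr 1; omega
      have hs : (-1 : ℝ) ^ (n - j) * (-1 : ℝ) ^ (n - j) = 1 := by
        rw [← pow_add, ← two_mul, pow_mul]
        norm_num
      rw [pco_neg n j b hjn, pco]
      have hnf : (n.factorial : ℝ) ≠ 0 := by positivity
      calc (-1 : ℝ) ^ (n - j) * ((-1 : ℝ) ^ (n - j) * (n.choose j : ℝ) * b ^ (n - j) / n.factorial) *
            (j.choose i : ℝ) * b ^ (j - i)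
          = ((-1 : ℝ) ^ (n - j) * (-1) ^ (n - j)) * (b ^ (n - j) * b ^ (j - i)) *
              ((n.choose j : ℝ) * (j.choose i : ℝ)) / n.factorial := by ring
        _ = 1 * b ^ (n - i) * ((n.choose j : ℝ) * (j.choose i : ℝ)) / n.factorial := by rw [hb, hs]
        _ = (b ^ (n - i) / n.factorial) * ((1 : ℝ) ^ (n - j) * (n.choose j : ℝ) * (j.choose i : ℝ)) := by
            rw [one_pow]; ring
    · rw [Nat.choose_eq_zero_of_lt h]
      push_cast
      ring
  rw [Finset.sum_congr rfl hterm, ← Finset.mul_sum, choose_sum_gen (1 : ℝ) n i hi]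
  norm_num
  ring

lemma D_restruct (n : ℕ) (b c : ℝ) :
    ∑ j ∈ Finset.range (n + 1), ∑ k ∈ Finset.range (n + 1),
        (pco n b j * pco n c k) * ∑ i ∈ Finset.range (j + 1),
          (j.choose i : ℝ) * (k.choose i : ℝ) * i.factorial * b ^ (k - i) * c ^ (j - i)
      = ∑ i ∈ Finset.range (n + 1), (i.factorial : ℝ) *
          ((∑ j ∈ Finset.range (n + 1), pco n b j * (j.choose i : ℝ) * c ^ (j - i)) *
           (∑ k ∈ Finset.range (n + 1), pco n c k * (k.choose i : ℝ) * b ^ (k - i))) := by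
  have hext : ∀ j ∈ Finset.range (n + 1), ∀ k ∈ Finset.range (n + 1),
      (pco n b j * pco n c k) * ∑ i ∈ Finset.range (j + 1),
          (j.choose i : ℝ) * (k.choose i : ℝ) * i.factorial * b ^ (k - i) * c ^ (j - i)
        = ∑ i ∈ Finset.range (n + 1),
            (pco n b j * (j.choose i : ℝ) * c ^ (j - i)) *
            (pco n c k * (k.choose i : ℝ) * b ^ (k - i)) * i.factorial := by
    intro j hj k _
    have hjn : j + 1 ≤ n + 1 := by
      have := Finset.mem_range.mp hj
      omega
    rw [Finset.mul_sum, Finset.sum_subset (Finset.range_subset_range.mpr hjn)]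
    · exact Finset.sum_congr rfl (fun i _ => by ring)
    · intro i _ hi
      have : j < i := by
        simp only [Finset.mem_range] at hi
        omega
      rw [Nat.choose_eq_zero_of_lt this]
      push_cast
      ring
  calc ∑ j ∈ Finset.range (n + 1), ∑ k ∈ Finset.range (n + 1),
        (pco n b j * pco n c k) * ∑ i ∈ Finset.range (j + 1),
          (j.choose i : ℝ) * (k.choose i : ℝ) * i.factorial * b ^ (k - i) * c ^ (j - i)
      = ∑ j ∈ Finset.range (n + 1), ∑ k ∈ Finset.range (n + 1), ∑ i ∈ Finset.range (n + 1),
            (pco n b j * (j.choose i : ℝ) * c ^ (j - i)) *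
            (pco n c k * (k.choose i : ℝ) * b ^ (k - i)) * i.factorial := by
        apply Finset.sum_congr rfl
        intro j hj
        exact Finset.sum_congr rfl (fun k hk => hext j hj k hk)
    _ = ∑ i ∈ Finset.range (n + 1), ∑ j ∈ Finset.range (n + 1), ∑ k ∈ Finset.range (n + 1),
            (pco n b j * (j.choose i : ℝ) * c ^ (j - i)) *
            (pco n c k * (k.choose i : ℝ) * b ^ (k - i)) * i.factorial := by
        rw [show (∑ j ∈ Finset.range (n + 1), ∑ k ∈ Finset.range (n + 1), ∑ i ∈ Finset.range (n + 1),
            (pco n b j * (j.choose i : ℝ) * c ^ (j - i)) *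
            (pco n c k * (k.choose i : ℝ) * b ^ (k - i)) * i.factorial)
          = ∑ j ∈ Finset.range (n + 1), ∑ i ∈ Finset.range (n + 1), ∑ k ∈ Finset.range (n + 1),
            (pco n b j * (j.choose i : ℝ) * c ^ (j - i)) *
            (pco n c k * (k.choose i : ℝ) * b ^ (k - i)) * i.factorial
          from Finset.sum_congr rfl (fun j _ => Finset.sum_comm)]
        exact Finset.sum_comm
    _ = ∑ i ∈ Finset.range (n + 1), (i.factorial : ℝ) *
          ((∑ j ∈ Finset.range (n + 1), pco n b j * (j.choose i : ℝ) * c ^ (j - i)) *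
           (∑ k ∈ Finset.range (n + 1), pco n c k * (k.choose i : ℝ) * b ^ (k - i))) := by
        apply Finset.sum_congr rfl
        intro i _
        rw [Finset.sum_mul_sum, Finset.mul_sum]
        apply Finset.sum_congr rfl
        intro j _
        rw [Finset.mul_sum]
        exact Finset.sum_congr rfl (fun k _ => by ring)

lemma tsum_AA_same (n : ℕ) (b : ℝ) :
    ∑' m : ℕ, (m.factorial : ℝ) * Acoef n b m * Acoef n b m
      = Real.exp (b * b) / n.factorial := by
  rw [tsum_AA, D_restruct]
  have hG : ∀ i ∈ Finset.range (n + 1),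
      (i.factorial : ℝ) *
        ((∑ j ∈ Finset.range (n + 1), pco n b j * (j.choose i : ℝ) * b ^ (j - i)) *
         (∑ k ∈ Finset.range (n + 1), pco n b k * (k.choose i : ℝ) * b ^ (k - i)))
      = (i.factorial : ℝ) * ((if i = n then ((n.factorial : ℝ))⁻¹ else 0) *
          (if i = n then ((n.factorial : ℝ))⁻¹ else 0)) := by
    intro i hi
    rw [G_eq n i b (Nat.lt_succ_iff.mp (Finset.mem_range.mp hi))]
  rw [Finset.sum_congr rfl hG]
  rw [Finset.sum_eq_single_of_mem n (Finset.self_mem_range_succ n)]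
  · rw [if_pos rfl]
    have hnf : (n.factorial : ℝ) ≠ 0 := by positivity
    field_simp
  · intro i _ hne
    rw [if_neg hne]
    ring

lemma lag_match (n : ℕ) (b : ℝ) :
    (n.factorial : ℝ) * ∑ i ∈ Finset.range (n + 1), (i.factorial : ℝ) *
        (((-1 : ℝ) ^ (n - i) * (n.choose i : ℝ) * 2 ^ (n - i) * b ^ (n - i) / n.factorial) *
         ((n.choose i : ℝ) * 2 ^ (n - i) * b ^ (n - i) / n.factorial))
      = laguerrePoly n (4 * (b * b)) := by
  rw [laguerrePoly, Finset.mul_sum, ← Finset.sum_range_reflect]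
  apply Finset.sum_congr rfl
  intro i hi
  have hin : i ≤ n := Nat.lt_succ_iff.mp (Finset.mem_range.mp hi)
  have e1 : n + 1 - 1 - i = n - i := by omega
  rw [e1]
  have e2 : n - (n - i) = i := by omega
  rw [e2, Nat.choose_symm hin]
  have hfac : ((n.choose i : ℝ)) * i.factorial * (n - i).factorial = (n.factorial : ℝ) := by
    exact_mod_cast Nat.choose_mul_factorial_mul_factorial hin
  have hnf : (n.factorial : ℝ) ≠ 0 := by positivity
  have hif : (i.factorial : ℝ) ≠ 0 := by positivity
  have hpow : (4 * (b * b)) ^ i = 2 ^ i * 2 ^ i * (b ^ i * b ^ i) := by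
    rw [show (4 : ℝ) * (b * b) = (2 * b) * (2 * b) by ring, ← mul_pow, ← mul_pow, ← mul_pow]
    ring
  rw [hpow]
  field_simp
  rw [← hfac]
  ring

lemma tsum_AA_opp (n : ℕ) (b : ℝ) :
    (n.factorial : ℝ) * ∑' m : ℕ, (m.factorial : ℝ) * Acoef n b m * Acoef n (-b) m
      = Real.exp (-(b * b)) * laguerrePoly n (4 * (b * b)) := by
  rw [tsum_AA, D_restruct]
  have hbc : b * (-b) = -(b * b) := by ring
  rw [hbc]
  have hsum : ∀ i ∈ Finset.range (n + 1),
      (i.factorial : ℝ) *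
        ((∑ j ∈ Finset.range (n + 1), pco n b j * (j.choose i : ℝ) * (-b) ^ (j - i)) *
         (∑ k ∈ Finset.range (n + 1), pco n (-b) k * (k.choose i : ℝ) * b ^ (k - i)))
      = (i.factorial : ℝ) *
          (((-1 : ℝ) ^ (n - i) * (n.choose i : ℝ) * 2 ^ (n - i) * b ^ (n - i) / n.factorial) *
           ((n.choose i : ℝ) * 2 ^ (n - i) * b ^ (n - i) / n.factorial)) := by
    intro i hi
    have hin : i ≤ n := Nat.lt_succ_iff.mp (Finset.mem_range.mp hi)
    rw [H1_eq n i b hin, H2_eq n i b hin]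
  rw [Finset.sum_congr rfl hsum, ← lag_match n b]
  ring

lemma Acoef_neg (n : ℕ) (b : ℝ) (m : ℕ) :
    Acoef n (-b) m = (-1 : ℝ) ^ (n + m) * Acoef n b m := by
  rw [Acoef, Acoef, Finset.mul_sum]
  apply Finset.sum_congr rfl
  intro j hj
  have hjn : j ≤ n := Nat.lt_succ_iff.mp (Finset.mem_range.mp hj)
  rw [pco_neg n j b hjn]
  rcases le_or_gt j m with h | h
  · have hE : Ecoef (-b) j m = (-1 : ℝ) ^ (m - j) * Ecoef b j m := by
      rw [Ecoef, Ecoef, if_pos h, if_pos h, neg_pow b (m - j)]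
      ring
    rw [hE]
    have hsign : (-1 : ℝ) ^ (n - j) * (-1 : ℝ) ^ (m - j) * (-1 : ℝ) ^ (2 * j) = (-1 : ℝ) ^ (n + m) := by
      rw [← pow_add, ← pow_add]
      congr 1
      omega
    have h2j : (-1 : ℝ) ^ (2 * j) = 1 := by
      rw [pow_mul]
      norm_num
    rw [h2j, mul_one] at hsign
    calc (-1 : ℝ) ^ (n - j) * pco n b j * ((-1 : ℝ) ^ (m - j) * Ecoef b j m)
        = ((-1 : ℝ) ^ (n - j) * (-1 : ℝ) ^ (m - j)) * (pco n b j * Ecoef b j m) := by ring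
      _ = (-1 : ℝ) ^ (n + m) * (pco n b j * Ecoef b j m) := by rw [hsign]
  · have hE : Ecoef (-b) j m = 0 := by rw [Ecoef, if_neg (by omega)]
    have hE' : Ecoef b j m = 0 := by rw [Ecoef, if_neg (by omega)]
    rw [hE, hE']
    ring

theorem laguerreFun_abs_le_one' (ℓ : ℕ) (v : ℝ) (hv : 0 ≤ v) :
    |laguerrePoly ℓ v * Real.exp (-v / 2)| ≤ 1 := by
  set b : ℝ := Real.sqrt v / 2 with hbdef
  have hb : b * b = v / 4 := by
    rw [hbdef, div_mul_div_comm, Real.mul_self_sqrt hv]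
    norm_num
  have h4 : 4 * (b * b) = v := by rw [hb]; ring
  have hL := tsum_AA_opp ℓ b
  rw [h4, hb] at hL
  have hnorm : ∀ m : ℕ, ‖(m.factorial : ℝ) * Acoef ℓ b m * Acoef ℓ (-b) m‖
      = (m.factorial : ℝ) * Acoef ℓ b m * Acoef ℓ b m := by
    intro m
    rw [Acoef_neg]
    have h1 : (m.factorial : ℝ) * Acoef ℓ b m * ((-1 : ℝ) ^ (ℓ + m) * Acoef ℓ b m)
        = (-1 : ℝ) ^ (ℓ + m) * ((m.factorial : ℝ) * (Acoef ℓ b m * Acoef ℓ b m)) := by ring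
    rw [h1, norm_mul, norm_pow, norm_neg, norm_one, one_pow, one_mul, Real.norm_eq_abs,
      abs_of_nonneg (mul_nonneg (Nat.cast_nonneg _) (mul_self_nonneg _)), ← mul_assoc]
  have hsumnorm : Summable (fun m : ℕ => ‖(m.factorial : ℝ) * Acoef ℓ b m * Acoef ℓ (-b) m‖) :=
    (summable_AA ℓ b b).congr (fun m => (hnorm m).symm)
  have habs : |∑' m : ℕ, (m.factorial : ℝ) * Acoef ℓ b m * Acoef ℓ (-b) m|
      ≤ ∑' m : ℕ, ‖(m.factorial : ℝ) * Acoef ℓ b m * Acoef ℓ (-b) m‖ := by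
    rw [← Real.norm_eq_abs]
    exact norm_tsum_le_tsum_norm hsumnorm
  have htsumnorm : ∑' m : ℕ, ‖(m.factorial : ℝ) * Acoef ℓ b m * Acoef ℓ (-b) m‖
      = Real.exp (v / 4) / ℓ.factorial := by
    rw [tsum_congr hnorm, tsum_AA_same, hb]
  have hlf : (0 : ℝ) < ℓ.factorial := by positivity
  have key : |Real.exp (-(v / 4)) * laguerrePoly ℓ v| ≤ Real.exp (v / 4) := by
    rw [← hL, abs_mul, Nat.abs_cast]
    calc (ℓ.factorial : ℝ) * |∑' m : ℕ, (m.factorial : ℝ) * Acoef ℓ b m * Acoef ℓ (-b) m|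
        ≤ (ℓ.factorial : ℝ) * (Real.exp (v / 4) / ℓ.factorial) := by
          apply mul_le_mul_of_nonneg_left _ hlf.le
          rw [← htsumnorm]
          exact habs
      _ = Real.exp (v / 4) := by field_simp
  have hlag : |laguerrePoly ℓ v| ≤ Real.exp (v / 2) := by
    have h5 : |laguerrePoly ℓ v| = Real.exp (v / 4) * |Real.exp (-(v / 4)) * laguerrePoly ℓ v| := by
      rw [abs_mul, Real.abs_exp, ← mul_assoc, ← Real.exp_add]
      norm_num
    rw [h5]
    calc Real.exp (v / 4) * |Real.exp (-(v / 4)) * laguerrePoly ℓ v|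
        ≤ Real.exp (v / 4) * Real.exp (v / 4) :=
          mul_le_mul_of_nonneg_left key (Real.exp_pos _).le
      _ = Real.exp (v / 2) := by
          rw [← Real.exp_add]
          congr 1
          ring
  rw [abs_mul, Real.abs_exp]
  calc |laguerrePoly ℓ v| * Real.exp (-v / 2)
      ≤ Real.exp (v / 2) * Real.exp (-v / 2) :=
        mul_le_mul_of_nonneg_right hlag (Real.exp_pos _).le
    _ = 1 := by
        rw [← Real.exp_add, show v / 2 + -v / 2 = 0 by ring, Real.exp_zero]

/-- For every `ℓ ∈ ℕ` and `v ≥ 0`, `|𝓛_ℓ(v)| ≤ 1`. -/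
theorem laguerreFun_abs_le_one (ℓ : ℕ) (v : ℝ) (hv : 0 ≤ v) : |laguerreFun ℓ v| ≤ 1 := by
  rw [laguerreFun]
  exact laguerreFun_abs_le_one' ℓ v hv
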